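/- The Fisher–Yates shuffle produces a uniformly distributed permutation: if for each n from N−1 down to 1 we draw k_n uniformly and independently from {0,…,n} and swap positions n and k_n of an array of N distinct elements, then the resulting arrangement is uniform over all N! permutations. -/

import Mathlib

/-- The permutation produced by the Fisher–Yates shuffle from the random
indices `k`, namely the composition of transpositions
`τ_{N-1, k_{N-1}} ∘ ⋯ ∘ τ_{1, k_1}` (the `n = 0` factor is the identity). -/
def fisherYatesPerm (N : ℕ) (k : ∀ i : Fin N, Fin (i.1 + 1)) :
    Equiv.Perm (Fin N) :=
  (((List.finRange N).reverse.map
    (fun i => Equiv.swap i (Fin.castLE i.isLt (k i))))).prod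

/-- Embedding `Perm (Fin N)` into `Perm (Fin (N+1))` via `Fin.castSucc`. -/
noncomputable def fyHom (N : ℕ) : Equiv.Perm (Fin N) →* Equiv.Perm (Fin (N + 1)) :=
  Equiv.Perm.viaEmbeddingHom Fin.castSuccEmb

lemma fyHom_last (N : ℕ) (σ : Equiv.Perm (Fin N)) : fyHom N σ (Fin.last N) = Fin.last N := by
  refine Equiv.Perm.viaEmbedding_apply_of_notMem σ Fin.castSuccEmb _ ?_
  rintro ⟨y, hy⟩
  exact (Fin.castSucc_lt_last y).ne hy

lemma fyHom_swap (N : ℕ) (a b : Fin N) :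
    fyHom N (Equiv.swap a b) = Equiv.swap a.castSucc b.castSucc := by
  ext x
  induction x using Fin.lastCases with
  | last =>
      rw [fyHom_last, Equiv.swap_apply_of_ne_of_ne (Fin.castSucc_lt_last a).ne'
        (Fin.castSucc_lt_last b).ne']
  | cast y =>
      have h1 : fyHom N (Equiv.swap a b) y.castSucc = (Equiv.swap a b y).castSucc :=
        Equiv.Perm.viaEmbedding_apply _ Fin.castSuccEmb y
      have h2 : Equiv.swap a.castSucc b.castSucc y.castSucc = (Equiv.swap a b y).castSucc :=
        Fin.castSucc_injective N |>.swap_apply a b y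
      rw [h1, h2]

lemma fy_succ (N : ℕ) (k : ∀ i : Fin (N + 1), Fin (i.1 + 1)) :
    fisherYatesPerm (N + 1) k =
      Equiv.swap (Fin.last N) (Fin.castLE (Fin.last N).isLt (k (Fin.last N))) *
        fyHom N (fisherYatesPerm N fun i => k i.castSucc) := by
  unfold fisherYatesPerm
  rw [List.finRange_succ_last, List.reverse_append, List.reverse_singleton,
    List.singleton_append, List.map_cons, List.prod_cons, (fyHom N).map_list_prod,
    List.map_map, List.map_reverse, List.map_reverse, List.map_map]
  congr 2
  congr 1
  refine List.map_congr_left fun i _ => ?_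
  simp only [Function.comp_apply, fyHom_swap]
  exact congrArg _ (Fin.ext rfl)

lemma fy_inj (N : ℕ) : Function.Injective (fisherYatesPerm N) := by
  induction N with
  | zero => intro k k' _; funext i; exact i.elim0
  | succ N ih =>
      intro k k' h
      rw [fy_succ, fy_succ] at h
      have hlast : k (Fin.last N) = k' (Fin.last N) := by
        have := congrArg (fun σ : Equiv.Perm (Fin (N + 1)) => σ (Fin.last N)) h
        simp only [Equiv.Perm.mul_apply, fyHom_last, Equiv.swap_apply_left] at this
        exact Fin.castLE_injective _ this
      rw [hlast] at h
      have h2 := mul_left_cancel h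
      have h3 : (fisherYatesPerm N fun i => k i.castSucc) =
          (fisherYatesPerm N fun i => k' i.castSucc) :=
        Equiv.Perm.viaEmbeddingHom_injective Fin.castSuccEmb h2
      have h4 := ih h3
      funext i
      induction i using Fin.lastCases with
      | last => exact hlast
      | cast y => exact congrFun h4 y

lemma fy_card (N : ℕ) :
    Fintype.card (∀ i : Fin N, Fin (i.1 + 1)) = Fintype.card (Equiv.Perm (Fin N)) := by
  rw [Fintype.card_pi, Fintype.card_perm, Fintype.card_fin]
  simp only [Fintype.card_fin]
  rw [Fin.prod_univ_eq_prod_range (fun i => i + 1), Finset.prod_range_add_one_eq_factorial]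

/-- Fisher–Yates correctness: if the indices `k_n` are drawn independently and
uniformly from `{0,…,n}` (i.e. `k` is uniform on the product set), then the
resulting permutation is uniform over all `N!` permutations. -/
theorem fisherYates_uniform (N : ℕ) :
    (PMF.uniformOfFintype (∀ i : Fin N, Fin (i.1 + 1))).map (fisherYatesPerm N) =
      PMF.uniformOfFintype (Equiv.Perm (Fin N)) := by
  have hbij : Function.Bijective (fisherYatesPerm N) :=
    (Fintype.bijective_iff_injective_and_card _).mpr ⟨fy_inj N, fy_card N⟩
  set e := Equiv.ofBijective _ hbij with he
  ext σ
  rw [PMF.map_apply, tsum_eq_single (e.symm σ)]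
  · have : fisherYatesPerm N (e.symm σ) = σ := e.apply_symm_apply σ
    rw [if_pos this.symm, PMF.uniformOfFintype_apply, PMF.uniformOfFintype_apply, fy_card N]
  · intro b hb
    rw [if_neg]
    intro hσ
    exact hb (by rw [hσ]; exact (e.symm_apply_apply b).symm)
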